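/- arXiv:2012.13255 — 2 statements merged into one kernel-verified Lean document; each statement's English description precedes it below -/
import Mathlib

section
/- Let Y be a finite type with at least two elements, let γ ≥ 0, and let f, g : X → Y → ℝ be score functions such that |f x y − g x y| ≤ γ for every x ∈ X and y ∈ Y (i.e., f is (γ, X)-compressible to g). Then for every pair (x, y): if g x y ≤ max_{j ≠ y} g x j, then f x y ≤ 2γ + max_{j ≠ y} f x j. Consequently, for any probability measure μ on X × Y one has L₀(g) ≤ L_{2γ}(f), and for any finite sample S one has L̂₀(g; S) ≤ L̂_{2γ}(f; S). (This is the pointwise margin-transfer step underlying the compression-based generalization bound used in the paper's appendix: a γ-accurate compression of f can only misclassify points where f has margin at most 2γ.) -/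
open MeasureTheory
open scoped Classical

/-- The maximum score assigned by `h` at input `x` over all labels other than `y`
(as a real supremum; equal to the max over `j ≠ y` when such `j` exist). -/
noncomputable def maxOther {X Y : Type*} [Fintype Y] (h : X → Y → ℝ) (x : X) (y : Y) : ℝ :=
  ⨆ j : {j : Y // j ≠ y}, h x (j : Y)

/-- The margin loss at level `γ`:
`L_γ(h) = μ {(x,y) : h x y ≤ γ + max_{j ≠ y} h x j}`. -/
noncomputable def marginLoss {X Y : Type*} [MeasurableSpace X] [MeasurableSpace Y] [Fintype Y]
    (μ : Measure (X × Y)) (γ : ℝ) (h : X → Y → ℝ) : ℝ :=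
  (μ {p : X × Y | h p.1 p.2 ≤ γ + maxOther h p.1 p.2}).toReal

/-- The empirical margin loss at level `γ` on a sample `S` of `m` points:
`L̂_γ(h; S) = (1/m) · #{i : h xᵢ yᵢ ≤ γ + max_{j ≠ yᵢ} h xᵢ j}`. -/
noncomputable def empMarginLoss {X Y : Type*} [Fintype Y] {m : ℕ}
    (γ : ℝ) (h : X → Y → ℝ) (S : Fin m → X × Y) : ℝ :=
  ((Finset.univ.filter fun i : Fin m =>
      h (S i).1 (S i).2 ≤ γ + maxOther h (S i).1 (S i).2).card : ℝ) / m

/-- If `f` is `(γ, X)`-compressible to `g` (i.e. `|f x y − g x y| ≤ γ`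
everywhere), then pointwise any point misclassified by `g` has `f`-margin at most `2γ`;
consequently `L₀(g) ≤ L_{2γ}(f)` for every probability measure `μ`, and
`L̂₀(g; S) ≤ L̂_{2γ}(f; S)` for every finite sample `S`. -/
theorem margin_transfer_of_compressible
    {X Y : Type*} [MeasurableSpace X] [MeasurableSpace Y] [Fintype Y] [Nontrivial Y]
    (γ : ℝ) (hγ : 0 ≤ γ)
    (f g : X → Y → ℝ)
    (hfg : ∀ x y, |f x y - g x y| ≤ γ) :
    (∀ x y, g x y ≤ maxOther g x y → f x y ≤ 2 * γ + maxOther f x y) ∧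
    (∀ μ : Measure (X × Y), IsProbabilityMeasure μ →
      marginLoss μ 0 g ≤ marginLoss μ (2 * γ) f) ∧
    (∀ (m : ℕ) (S : Fin m → X × Y),
      empMarginLoss 0 g S ≤ empMarginLoss (2 * γ) f S) := by

  have key : ∀ x y, g x y ≤ maxOther g x y → f x y ≤ 2 * γ + maxOther f x y := by
    intro x y hgm
    obtain ⟨j, hj⟩ := exists_ne y
    have hne : Nonempty {j : Y // j ≠ y} := ⟨⟨j, hj⟩⟩
    have h1 : f x y ≤ g x y + γ := by
      have := abs_le.mp (hfg x y); linarith [this.2]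
    have h2 : maxOther g x y ≤ maxOther f x y + γ := by
      apply ciSup_le
      intro k
      have := abs_le.mp (hfg x (k : Y))
      have hk : f x (k : Y) ≤ maxOther f x y :=
        le_ciSup (f := fun j : {j : Y // j ≠ y} => f x (j : Y))
          (Set.Finite.bddAbove (Set.finite_range _)) k
      linarith [this.1]
    linarith
  refine ⟨key, ?_, ?_⟩
  · intro μ hμ
    apply ENNReal.toReal_mono (measure_ne_top μ _)
    apply measure_mono
    intro p hp
    simp only [Set.mem_setOf_eq] at hp ⊢
    exact key p.1 p.2 (by linarith)
  · intro m S
    unfold empMarginLoss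
    have hcard : (Finset.univ.filter fun i : Fin m =>
        g (S i).1 (S i).2 ≤ 0 + maxOther g (S i).1 (S i).2).card ≤
        (Finset.univ.filter fun i : Fin m =>
        f (S i).1 (S i).2 ≤ 2 * γ + maxOther f (S i).1 (S i).2).card := by
      apply Finset.card_le_card
      intro i hi
      simp only [Finset.mem_filter, Finset.mem_univ, true_and] at hi ⊢
      exact key (S i).1 (S i).2 (by linarith)
    have : (0:ℝ) < m ∨ (m:ℝ) = 0 := by
      rcases Nat.eq_zero_or_pos m with h | h
      · right; exact_mod_cast h
      · left; exact_mod_cast h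
    rcases this with h | h
    · exact div_le_div_of_nonneg_right (by exact_mod_cast hcard) h.le
    · simp [h]
end

section
/- Let X be a measurable space, Y a finite type with at least two elements, and μ a probability measure on X × Y. Let r ≥ 2 and d ≥ 1 be natural numbers, let γ ≥ 0, and let G be a finite set of measurable score functions g : X → Y → ℝ with |G| ≤ r^d. Then for every δ ∈ (0,1) and every m ≥ 1, with probability at least 1 − δ over a sample S drawn from the m-fold product measure μ^⊗m, the following holds simultaneously for all f : X → Y → ℝ and all g ∈ G with |f x y − g x y| ≤ γ for every x ∈ X and y ∈ Y: L₀(g) ≤ L̂_{2γ}(f; S) + √((d·log r + log(1/δ)) / (2m)). (This is the compression-based generalization bound, in the form of Theorem 2.1 of Arora et al., applied in the paper's appendix to classifiers compressed to d discretized intrinsic parameters with r quantization states each.) -/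
open MeasureTheory
open scoped Classical

open scoped ENNReal BigOperators

lemma bern_mgf (q : ℝ) (hq0 : 0 ≤ q) (hq1 : q ≤ 1) (t : ℝ) :
    1 - q + q * Real.exp t ≤ Real.exp (q * t + t ^ 2 / 8) := by
  set D : ℝ → ℝ := fun s => 1 - q + q * Real.exp s with hDdef
  have hD : ∀ s, 0 < D s := by
    intro s
    have he : 0 < Real.exp s := Real.exp_pos s
    show 0 < 1 - q + q * Real.exp s
    rcases lt_or_ge (Real.exp s) 1 with h | h
    · nlinarith [mul_nonneg hq0 he.le, mul_le_of_le_one_left (sub_nonneg.2 h.le) hq1]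
    · nlinarith [mul_le_mul_of_nonneg_left h hq0]
  set φ : ℝ → ℝ := fun s => q * Real.exp s / D s with hφdef
  have hD' : ∀ s, HasDerivAt D (q * Real.exp s) s := by
    intro s
    exact ((Real.hasDerivAt_exp s).const_mul q).const_add (1 - q)
  have hF' : ∀ s, HasDerivAt (fun u => Real.log (D u)) (φ s) s := by
    intro s
    exact (hD' s).log (hD s).ne'
  have hφ' : ∀ s, HasDerivAt φ (q * Real.exp s * (1 - q) / (D s) ^ 2) s := by
    intro s
    have h := ((Real.hasDerivAt_exp s).const_mul q).div (hD' s) (hD s).ne'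
    exact h.congr_deriv (by
      rw [show D s = 1 - q + q * Real.exp s from rfl]
      ring)
  have hφbound : ∀ s, |q * Real.exp s * (1 - q) / (D s) ^ 2| ≤ 1 / 4 := by
    intro s
    have he : 0 < Real.exp s := Real.exp_pos s
    have ha : 0 ≤ q * Real.exp s := mul_nonneg hq0 he.le
    have hb : 0 ≤ 1 - q := sub_nonneg.2 hq1
    have hDs : 0 < D s := hD s
    have hDeq : D s = (1 - q) + q * Real.exp s := rfl
    rw [abs_of_nonneg (by positivity)]
    rw [div_le_iff₀ (by positivity)]
    nlinarith [sq_nonneg (q * Real.exp s - (1 - q))]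
  have hφlip : ∀ s, |φ s - q| ≤ |s| / 4 := by
    intro s
    have hφ0 : φ 0 = q := by
      simp [hφdef, hDdef]
    have := Convex.norm_image_sub_le_of_norm_hasDerivWithin_le
      (f := φ) (f' := fun s => q * Real.exp s * (1 - q) / (D s) ^ 2) (s := Set.univ)
      (C := 1 / 4) (fun x _ => (hφ' x).hasDerivWithinAt) (fun x _ => by
        rw [Real.norm_eq_abs]; exact hφbound x) convex_univ (Set.mem_univ 0)
      (Set.mem_univ s)
    rw [hφ0, Real.norm_eq_abs, Real.norm_eq_abs, sub_zero] at this
    linarith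
  -- the function G s = q s + s^2/8 - log (D s), show G s ≥ 0
  set G : ℝ → ℝ := fun s => q * s + s ^ 2 / 8 - Real.log (D s) with hGdef
  have hG' : ∀ s, HasDerivAt G (q + s / 4 - φ s) s := by
    intro s
    have h1 : HasDerivAt (fun u : ℝ => q * u) q s := by
      simpa using (hasDerivAt_id s).const_mul q
    have h2 : HasDerivAt (fun u : ℝ => u ^ 2 / 8) (s / 4) s := by
      have := (hasDerivAt_pow 2 s).div_const 8
      exact this.congr_deriv (by norm_num; ring)
    exact ((h1.add h2).sub (hF' s))
  have hGdiff : Differentiable ℝ G := fun s => (hG' s).differentiableAt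
  have hderiv : ∀ s, deriv G s = q + s / 4 - φ s := fun s => (hG' s).deriv
  have hG0 : G 0 = 0 := by simp [hGdef, hDdef]
  have hGnonneg : ∀ s, 0 ≤ G s := by
    intro s
    rcases le_or_gt 0 s with hs | hs
    · have hmono : MonotoneOn G (Set.Ici (0 : ℝ)) := by
        apply monotoneOn_of_deriv_nonneg (convex_Ici 0) hGdiff.continuous.continuousOn
          hGdiff.differentiableOn
        intro x hx
        rw [interior_Ici] at hx
        have hx0 : 0 < x := hx
        rw [hderiv]
        have := hφlip x
        rw [abs_of_pos hx0] at this
        have h2 := abs_le.1 this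
        linarith [h2.1]
      have := hmono (Set.mem_Ici.2 le_rfl) (Set.mem_Ici.2 hs) hs
      linarith [hG0]
    · have hanti : AntitoneOn G (Set.Iic (0 : ℝ)) := by
        apply antitoneOn_of_deriv_nonpos (convex_Iic 0) hGdiff.continuous.continuousOn
          hGdiff.differentiableOn
        intro x hx
        rw [interior_Iic] at hx
        have hx0 : x < 0 := hx
        rw [hderiv]
        have := hφlip x
        rw [abs_of_neg hx0] at this
        have h2 := abs_le.1 this
        linarith [h2.2]
      have := hanti (Set.mem_Iic.2 hs.le) (Set.mem_Iic.2 le_rfl) hs.le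
      linarith [hG0]
  have hlog : Real.log (D t) ≤ q * t + t ^ 2 / 8 := by
    have := hGnonneg t
    simp only [hGdef] at this
    linarith
  calc D t = Real.exp (Real.log (D t)) := (Real.exp_log (hD t)).symm
    _ ≤ Real.exp (q * t + t ^ 2 / 8) := Real.exp_le_exp.2 hlog

lemma lintegral_pi_prod {α : Type*} [MeasurableSpace α] (μ : Measure α) [SigmaFinite μ]
    {F : α → ℝ≥0∞} (hF : Measurable F) :
    ∀ m : ℕ, ∫⁻ S : Fin m → α, ∏ i, F (S i) ∂(Measure.pi fun _ => μ)
      = (∫⁻ x, F x ∂μ) ^ m := by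
  intro m
  induction m with
  | zero => simp [MeasureTheory.lintegral_const, Measure.pi_univ]
  | succ n ih =>
    have hMP := measurePreserving_piFinSuccAbove (fun _ : Fin (n + 1) => μ) 0
    have hG : Measurable (fun p : α × (Fin n → α) => F p.1 * ∏ i, F (p.2 i)) := by
      exact (hF.comp measurable_fst).mul
        (Finset.measurable_prod _ fun i _ => hF.comp ((measurable_pi_apply i).comp measurable_snd))
    calc ∫⁻ S : Fin (n + 1) → α, ∏ i, F (S i) ∂(Measure.pi fun _ => μ)
        = ∫⁻ S : Fin (n + 1) → α,
            (fun p : α × (Fin n → α) => F p.1 * ∏ i, F (p.2 i))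
              (MeasurableEquiv.piFinSuccAbove (fun _ => α) 0 S) ∂(Measure.pi fun _ => μ) := by
          congr 1
          funext S
          simp only [MeasurableEquiv.piFinSuccAbove_apply]
          rw [Fin.prod_univ_succ]
          congr 1
      _ = ∫⁻ p : α × (Fin n → α), F p.1 * ∏ i, F (p.2 i)
            ∂(μ.prod (Measure.pi fun _ => μ)) := hMP.lintegral_comp hG
      _ = (∫⁻ x, F x ∂μ) * ∫⁻ T : Fin n → α, ∏ i, F (T i) ∂(Measure.pi fun _ => μ) := by
          exact lintegral_prod_mul hF.aemeasurable
            (Finset.measurable_prod _ fun i _ =>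
              hF.comp (measurable_pi_apply i)).aemeasurable
      _ = (∫⁻ x, F x ∂μ) ^ (n + 1) := by rw [ih]; ring

lemma chernoff_bound {α : Type*} [MeasurableSpace α] (μ : Measure α) [IsProbabilityMeasure μ]
    {A : Set α} (hA : MeasurableSet A) (m : ℕ) (hm : 1 ≤ m) (ε : ℝ) (hε : 0 ≤ ε) :
    (Measure.pi fun _ : Fin m => μ)
      {S : Fin m → α | ((Finset.univ.filter fun i : Fin m => S i ∈ A).card : ℝ) / m + ε
          < (μ A).toReal}
      ≤ ENNReal.ofReal (Real.exp (-(2 * m * ε ^ 2))) := by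
  set ν := Measure.pi fun _ : Fin m => μ with hν
  set q : ℝ := (μ A).toReal with hqdef
  have hq0 : 0 ≤ q := ENNReal.toReal_nonneg
  have hq1 : q ≤ 1 := by
    rw [hqdef]
    exact ENNReal.toReal_le_of_le_ofReal zero_le_one (by simpa using prob_le_one (μ := μ) (s := A))
  set t : ℝ := 4 * ε with htdef
  have ht : 0 ≤ t := by positivity
  set Z : α → ℝ := fun p => if p ∈ A then 1 else 0 with hZdef
  have hZmeas : Measurable Z := Measurable.ite hA measurable_const measurable_const
  set W : (Fin m → α) → ℝ := fun S => ∑ i, (q - Z (S i)) with hWdef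
  have hWmeas : Measurable W := by
    apply Finset.measurable_sum
    intro i _
    exact measurable_const.sub (hZmeas.comp (measurable_pi_apply i))
  set F : α → ℝ≥0∞ := fun p => ENNReal.ofReal (Real.exp (t * (q - Z p))) with hFdef
  have hFmeas : Measurable F :=
    ENNReal.measurable_ofReal.comp (Real.measurable_exp.comp (measurable_const.mul
      (measurable_const.sub hZmeas)))
  -- step A : inclusion
  have hincl : {S : Fin m → α | ((Finset.univ.filter fun i : Fin m => S i ∈ A).card : ℝ) / m + ε
      < q} ⊆ {S | ENNReal.ofReal (Real.exp (t * (m * ε))) ≤ ∏ i, F (S i)} := by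
    intro S hS
    simp only [Set.mem_setOf_eq] at hS ⊢
    have hm0 : (0 : ℝ) < m := by exact_mod_cast hm
    have hsum : ∑ i, Z (S i) = ((Finset.univ.filter fun i : Fin m => S i ∈ A).card : ℝ) := by
      rw [hZdef]
      simp [Finset.sum_boole]
    have hW : m * ε ≤ W S := by
      rw [hWdef]
      simp only [Finset.sum_sub_distrib, Finset.sum_const, Finset.card_univ, Fintype.card_fin,
        nsmul_eq_mul, hsum]
      have := (div_lt_iff₀ hm0).mp (by linarith : ((Finset.univ.filter fun i : Fin m =>
        S i ∈ A).card : ℝ) / m < q - ε)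
      linarith
    have hprod : ∏ i, F (S i) = ENNReal.ofReal (Real.exp (t * W S)) := by
      rw [hFdef, hWdef]
      rw [Finset.mul_sum, Real.exp_sum, ENNReal.ofReal_prod_of_nonneg]
      intro i _
      positivity
    rw [hprod]
    apply ENNReal.ofReal_le_ofReal
    apply Real.exp_le_exp.2
    exact mul_le_mul_of_nonneg_left hW ht
  -- step B : Markov
  have hmarkov : ν {S | ENNReal.ofReal (Real.exp (t * (m * ε))) ≤ ∏ i, F (S i)}
      ≤ (ENNReal.ofReal (Real.exp (t * (m * ε))))⁻¹ * ∫⁻ S, ∏ i, F (S i) ∂ν := by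
    have hmeasprod : Measurable fun S : Fin m → α => ∏ i, F (S i) :=
      Finset.measurable_prod _ fun i _ => hFmeas.comp (measurable_pi_apply i)
    have hkey := mul_meas_ge_le_lintegral₀ (μ := ν) hmeasprod.aemeasurable
      (ENNReal.ofReal (Real.exp (t * (m * ε))))
    have hc0 : ENNReal.ofReal (Real.exp (t * (m * ε))) ≠ 0 := by
      simp [ENNReal.ofReal_eq_zero, not_le, Real.exp_pos]
    have hct : ENNReal.ofReal (Real.exp (t * (m * ε))) ≠ ⊤ := ENNReal.ofReal_ne_top
    have hstep : ∀ {c x I : ℝ≥0∞}, c ≠ 0 → c ≠ ⊤ → c * x ≤ I → x ≤ c⁻¹ * I := by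
      intro c x I h0 hT h
      calc x = c⁻¹ * (c * x) := by rw [← mul_assoc, ENNReal.inv_mul_cancel h0 hT, one_mul]
        _ ≤ c⁻¹ * I := mul_le_mul_right h _
    exact hstep hc0 hct hkey
  -- step D : per-coordinate bound
  have hcoord : ∫⁻ x, F x ∂μ ≤ ENNReal.ofReal (Real.exp (t ^ 2 / 8)) := by
    have hsplit : ∫⁻ x, F x ∂μ = (∫⁻ x in A, F x ∂μ) + ∫⁻ x in Aᶜ, F x ∂μ :=
      (lintegral_add_compl F hA).symm
    have hFA : ∫⁻ x in A, F x ∂μ = ENNReal.ofReal (Real.exp (t * (q - 1))) * μ A := by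
      have heq : ∫⁻ x in A, F x ∂μ
          = ∫⁻ _x in A, ENNReal.ofReal (Real.exp (t * (q - 1))) ∂μ :=
        setLIntegral_congr_fun hA (fun x hx => by
          simp only [hFdef, hZdef, if_pos hx])
      rw [heq, setLIntegral_const]
    have hFAc : ∫⁻ x in Aᶜ, F x ∂μ = ENNReal.ofReal (Real.exp (t * q)) * μ Aᶜ := by
      have heq : ∫⁻ x in Aᶜ, F x ∂μ
          = ∫⁻ _x in Aᶜ, ENNReal.ofReal (Real.exp (t * q)) ∂μ :=
        setLIntegral_congr_fun hA.compl (fun x hx => by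
          simp only [hFdef, hZdef, if_neg hx, sub_zero])
      rw [heq, setLIntegral_const]
    have hμA : μ A = ENNReal.ofReal q := by
      rw [hqdef, ENNReal.ofReal_toReal (measure_ne_top μ A)]
    have hμAc : μ Aᶜ = ENNReal.ofReal (1 - q) := by
      rw [prob_compl_eq_one_sub hA, hμA, ENNReal.ofReal_sub _ hq0, ENNReal.ofReal_one]
    rw [hsplit, hFA, hFAc, hμA, hμAc, ← ENNReal.ofReal_mul (Real.exp_pos _).le,
      ← ENNReal.ofReal_mul (Real.exp_pos _).le, ← ENNReal.ofReal_add (mul_nonneg (Real.exp_pos _).le hq0)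
        (mul_nonneg (Real.exp_pos _).le (sub_nonneg.2 hq1))]
    apply ENNReal.ofReal_le_ofReal
    -- real inequality
    have h := bern_mgf q hq0 hq1 (-t)
    have hmul := mul_le_mul_of_nonneg_left h (Real.exp_pos (t * q)).le
    have he1 : Real.exp (t * q) * Real.exp (-t) = Real.exp (t * (q - 1)) := by
      rw [← Real.exp_add]; ring_nf
    have he2 : Real.exp (t * q) * Real.exp (q * -t + (-t) ^ 2 / 8) = Real.exp (t ^ 2 / 8) := by
      rw [← Real.exp_add]; ring_nf
    nlinarith [Real.exp_pos (t * q), Real.exp_pos (-t)]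
  -- put together
  calc ν {S : Fin m → α | ((Finset.univ.filter fun i : Fin m => S i ∈ A).card : ℝ) / m + ε < q}
      ≤ ν {S | ENNReal.ofReal (Real.exp (t * (m * ε))) ≤ ∏ i, F (S i)} := measure_mono hincl
    _ ≤ (ENNReal.ofReal (Real.exp (t * (m * ε))))⁻¹ * ∫⁻ S, ∏ i, F (S i) ∂ν := hmarkov
    _ = ENNReal.ofReal (Real.exp (-(t * (m * ε)))) * (∫⁻ x, F x ∂μ) ^ m := by
        rw [lintegral_pi_prod μ hFmeas m]
        congr 1
        rw [Real.exp_neg, ← ENNReal.ofReal_inv_of_pos (Real.exp_pos _)]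
    _ ≤ ENNReal.ofReal (Real.exp (-(t * (m * ε)))) *
          (ENNReal.ofReal (Real.exp (t ^ 2 / 8))) ^ m := by
        gcongr
    _ = ENNReal.ofReal (Real.exp (-(t * (m * ε)) + m * (t ^ 2 / 8))) := by
        rw [← ENNReal.ofReal_pow (Real.exp_pos _).le, ← Real.exp_nat_mul,
          ← ENNReal.ofReal_mul (Real.exp_pos _).le, ← Real.exp_add]
    _ ≤ ENNReal.ofReal (Real.exp (-(2 * m * ε ^ 2))) := by
        apply ENNReal.ofReal_le_ofReal
        apply Real.exp_le_exp.2
        rw [htdef]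
        have hm0 : (0 : ℝ) ≤ m := Nat.cast_nonneg m
        nlinarith

lemma le_maxOther_iff {X Y : Type*} [Fintype Y] [Nontrivial Y] (h : X → Y → ℝ) (x : X) (y : Y)
    (c : ℝ) (hc : 0 ≤ c) :
    h x y ≤ c + maxOther h x y ↔
      ∃ j₁ j₂ : Y, j₁ ≠ j₂ ∧ h x y ≤ c + h x j₁ ∧ h x y ≤ c + h x j₂ := by
  obtain ⟨j', hj'⟩ := exists_ne y
  haveI : Nonempty {j : Y // j ≠ y} := ⟨⟨j', hj'⟩⟩
  constructor
  · intro hle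
    obtain ⟨j0, hj0⟩ := exists_eq_ciSup_of_finite (f := fun j : {j : Y // j ≠ y} => h x (j : Y))
    refine ⟨(j0 : Y), y, j0.2, ?_, by linarith⟩
    rw [maxOther, ← hj0] at hle
    exact hle
  · rintro ⟨j₁, j₂, hne, h1, h2⟩
    have hbdd : BddAbove (Set.range fun j : {j : Y // j ≠ y} => h x (j : Y)) :=
      Set.Finite.bddAbove (Set.finite_range _)
    rcases ne_or_eq j₁ y with hj | hj
    · have := le_ciSup hbdd (⟨j₁, hj⟩ : {j : Y // j ≠ y})
      rw [maxOther]
      calc h x y ≤ c + h x j₁ := h1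
        _ ≤ c + _ := by exact add_le_add_right this c
    · have hj2 : j₂ ≠ y := by rw [← hj]; exact hne.symm
      have := le_ciSup hbdd (⟨j₂, hj2⟩ : {j : Y // j ≠ y})
      rw [maxOther]
      calc h x y ≤ c + h x j₂ := h2
        _ ≤ c + _ := by exact add_le_add_right this c

lemma maxOther_le_add {X Y : Type*} [Fintype Y] [Nontrivial Y] (f g : X → Y → ℝ) (x : X) (y : Y)
    (γ : ℝ) (hfg : ∀ j, g x j ≤ f x j + γ) : maxOther g x y ≤ maxOther f x y + γ := by
  obtain ⟨j', hj'⟩ := exists_ne y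
  haveI : Nonempty {j : Y // j ≠ y} := ⟨⟨j', hj'⟩⟩
  show (⨆ j : {j : Y // j ≠ y}, g x (j : Y)) ≤ (⨆ j : {j : Y // j ≠ y}, f x (j : Y)) + γ
  refine ciSup_le fun j => ?_
  calc g x (j : Y) ≤ f x (j : Y) + γ := hfg _
    _ ≤ (⨆ j : {j : Y // j ≠ y}, f x (j : Y)) + γ :=
        add_le_add_left (le_ciSup (f := fun j : {j : Y // j ≠ y} => f x (j : Y))
          (Set.Finite.bddAbove (Set.finite_range _)) j) γ

/-- Compression-based generalization bound (Arora et al., Thm 2.1 form):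
for a finite class `G` of measurable score functions with `|G| ≤ r ^ d`, with probability at
least `1 − δ` over `S ~ μ^⊗m`, simultaneously for all `f` and all `g ∈ G` with
`|f x y − g x y| ≤ γ` everywhere,
`L₀(g) ≤ L̂_{2γ}(f; S) + √((d·log r + log(1/δ)) / (2m))`. -/
theorem compression_generalization_bound
    {X Y : Type*} [MeasurableSpace X] [MeasurableSpace Y] [Fintype Y] [Nontrivial Y]
    (μ : Measure (X × Y)) [IsProbabilityMeasure μ]
    (r d : ℕ) (hr : 2 ≤ r) (hd : 1 ≤ d)
    (γ : ℝ) (hγ : 0 ≤ γ)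
    (G : Finset (X → Y → ℝ))
    (hGmeas : ∀ g ∈ G, Measurable (Function.uncurry g))
    (hGcard : G.card ≤ r ^ d)
    (δ : ℝ) (hδ : δ ∈ Set.Ioo (0 : ℝ) 1)
    (m : ℕ) (hm : 1 ≤ m) :
    ENNReal.ofReal (1 - δ) ≤
      Measure.pi (fun _ : Fin m => μ)
        {S : Fin m → X × Y | ∀ (f : X → Y → ℝ), ∀ g ∈ G,
          (∀ x y, |f x y - g x y| ≤ γ) →
          marginLoss μ 0 g ≤ empMarginLoss (2 * γ) f S +
            Real.sqrt ((d * Real.log r + Real.log (1 / δ)) / (2 * m))} := by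
  set ν := Measure.pi (fun _ : Fin m => μ) with hν
  set ε : ℝ := Real.sqrt ((d * Real.log r + Real.log (1 / δ)) / (2 * m)) with hεdef
  have hm0 : (0 : ℝ) < m := by exact_mod_cast hm
  have hrpos : (0 : ℝ) < r := by exact_mod_cast (by omega : 0 < r)
  have hr1 : (1 : ℝ) ≤ r := by exact_mod_cast (by omega : 1 ≤ r)
  have hδ0 : 0 < δ := hδ.1
  have hδ1 : δ < 1 := hδ.2
  have harg : 0 ≤ (d * Real.log r + Real.log (1 / δ)) / (2 * m) := by
    apply div_nonneg _ (by positivity)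
    have h1 : 0 ≤ Real.log r := Real.log_nonneg hr1
    have h2 : 0 ≤ Real.log (1 / δ) := Real.log_nonneg ((le_div_iff₀ hδ0).2 (by linarith))
    positivity
  have hε0 : 0 ≤ ε := Real.sqrt_nonneg _
  have hε2 : ε ^ 2 = (d * Real.log r + Real.log (1 / δ)) / (2 * m) := Real.sq_sqrt harg
  -- the bad events
  set A : (X → Y → ℝ) → Set (X × Y) :=
    fun g => {p : X × Y | g p.1 p.2 ≤ 0 + maxOther g p.1 p.2} with hAdef
  have hAmeas : ∀ g ∈ G, MeasurableSet (A g) := by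
    intro g hg
    have hunc : Measurable (Function.uncurry g) := hGmeas g hg
    have heq : A g = ⋃ j₁ : Y, ⋃ j₂ : Y, ⋃ _ : j₁ ≠ j₂,
        ({p : X × Y | g p.1 p.2 ≤ 0 + g p.1 j₁} ∩ {p : X × Y | g p.1 p.2 ≤ 0 + g p.1 j₂}) := by
      ext p
      simp only [hAdef, Set.mem_setOf_eq, Set.mem_iUnion, Set.mem_inter_iff]
      rw [le_maxOther_iff g p.1 p.2 0 le_rfl]
      constructor
      · rintro ⟨j₁, j₂, hne, h1, h2⟩; exact ⟨j₁, j₂, hne, h1, h2⟩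
      · rintro ⟨j₁, j₂, hne, h1, h2⟩; exact ⟨j₁, j₂, hne, h1, h2⟩
    rw [heq]
    apply MeasurableSet.iUnion; intro j₁
    apply MeasurableSet.iUnion; intro j₂
    apply MeasurableSet.iUnion; intro _
    have hmeas1 : Measurable fun p : X × Y => g p.1 p.2 := hunc
    have hmeas2 : ∀ j : Y, Measurable fun p : X × Y => g p.1 j := fun j =>
      hunc.comp (measurable_fst.prodMk measurable_const)
    exact (measurableSet_le hmeas1 (measurable_const.add (hmeas2 j₁))).inter
      (measurableSet_le hmeas1 (measurable_const.add (hmeas2 j₂)))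
  -- empirical loss at level 0 as a count over A g
  have hempA : ∀ g ∈ G, ∀ S : Fin m → X × Y, empMarginLoss 0 g S =
      ((Finset.univ.filter fun i : Fin m => S i ∈ A g).card : ℝ) / m := by
    intro g hg S
    rfl
  have hmarginA : ∀ g, marginLoss μ 0 g = (μ (A g)).toReal := fun g => rfl
  -- bad events
  set Bad : (X → Y → ℝ) → Set (Fin m → X × Y) :=
    fun g => {S | empMarginLoss 0 g S + ε < marginLoss μ 0 g} with hBaddef
  have hBadmeas : ∀ g ∈ G, MeasurableSet (Bad g) := by
    intro g hg
    have hcount : Measurable fun S : Fin m → X × Y =>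
        ((Finset.univ.filter fun i : Fin m => S i ∈ A g).card : ℝ) := by
      have : (fun S : Fin m → X × Y =>
          ((Finset.univ.filter fun i : Fin m => S i ∈ A g).card : ℝ)) =
          fun S => ∑ i : Fin m, if S i ∈ A g then (1 : ℝ) else 0 := by
        funext S
        rw [Finset.sum_boole]
      rw [this]
      apply Finset.measurable_sum
      intro i _
      exact Measurable.ite (measurable_pi_apply i (hAmeas g hg)) measurable_const
        measurable_const
    have : Bad g = {S : Fin m → X × Y |
        ((Finset.univ.filter fun i : Fin m => S i ∈ A g).card : ℝ) / m + ε
          < marginLoss μ 0 g} := by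
      ext S
      simp only [hBaddef, Set.mem_setOf_eq, hempA g hg S]
    rw [this]
    exact measurableSet_lt ((hcount.div_const _).add_const _) measurable_const
  -- Chernoff bound for each bad event
  have hbound : ∀ g ∈ G, ν (Bad g) ≤ ENNReal.ofReal (δ / (r : ℝ) ^ d) := by
    intro g hg
    have hBadeq : Bad g = {S : Fin m → X × Y |
        ((Finset.univ.filter fun i : Fin m => S i ∈ A g).card : ℝ) / m + ε
          < (μ (A g)).toReal} := by
      ext S
      simp only [hBaddef, Set.mem_setOf_eq, hempA g hg S, hmarginA g]
    rw [hBadeq]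
    refine le_trans (chernoff_bound μ (hAmeas g hg) m hm ε hε0) ?_
    apply le_of_eq
    congr 1
    have hexp : -(2 * (m : ℝ) * ε ^ 2) = -(d * Real.log r + Real.log (1 / δ)) := by
      rw [hε2]
      field_simp
    rw [hexp, Real.exp_neg, Real.exp_add, Real.exp_nat_mul, Real.exp_log hrpos,
      Real.exp_log (by positivity : (0:ℝ) < 1 / δ)]
    rw [mul_one_div, inv_div]
  -- union bound
  have hcast : ((r ^ d : ℕ) : ℝ≥0∞) = ENNReal.ofReal ((r : ℝ) ^ d) := by
    rw [← ENNReal.ofReal_natCast (r ^ d)]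
    norm_num [Nat.cast_pow]
  have hunion : ν (⋃ g ∈ G, Bad g) ≤ ENNReal.ofReal δ := by
    calc ν (⋃ g ∈ G, Bad g) ≤ ∑ g ∈ G, ν (Bad g) := measure_biUnion_finset_le G Bad
      _ ≤ ∑ _g ∈ G, ENNReal.ofReal (δ / (r : ℝ) ^ d) := Finset.sum_le_sum hbound
      _ = G.card * ENNReal.ofReal (δ / (r : ℝ) ^ d) := by rw [Finset.sum_const, nsmul_eq_mul]
      _ ≤ ((r ^ d : ℕ) : ℝ≥0∞) * ENNReal.ofReal (δ / (r : ℝ) ^ d) :=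
          mul_le_mul_left (Nat.cast_le.2 hGcard) _
      _ = ENNReal.ofReal ((r : ℝ) ^ d * (δ / (r : ℝ) ^ d)) := by
          rw [hcast, ← ENNReal.ofReal_mul (by positivity)]
      _ = ENNReal.ofReal δ := by
          congr 1
          field_simp
  -- good set inclusion
  have hsubset : (⋃ g ∈ G, Bad g)ᶜ ⊆ {S : Fin m → X × Y | ∀ (f : X → Y → ℝ), ∀ g ∈ G,
      (∀ x y, |f x y - g x y| ≤ γ) →
      marginLoss μ 0 g ≤ empMarginLoss (2 * γ) f S + ε} := by
    intro S hS
    simp only [Set.mem_compl_iff, Set.mem_iUnion, not_exists] at hS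
    intro f g hg hfg
    have hnb : S ∉ Bad g := hS g hg
    have h1 : marginLoss μ 0 g ≤ empMarginLoss 0 g S + ε := not_lt.1 hnb
    have h2 : empMarginLoss 0 g S ≤ empMarginLoss (2 * γ) f S := by
      rw [hempA g hg S]
      unfold empMarginLoss
      have hsub : (Finset.univ.filter fun i : Fin m => S i ∈ A g) ⊆
          Finset.univ.filter fun i : Fin m =>
            f (S i).1 (S i).2 ≤ 2 * γ + maxOther f (S i).1 (S i).2 := by
        apply Finset.monotone_filter_right
        intro i _ hi
        have hgle : g (S i).1 (S i).2 ≤ 0 + maxOther g (S i).1 (S i).2 := hi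
        have hmax : maxOther g (S i).1 (S i).2 ≤ maxOther f (S i).1 (S i).2 + γ :=
          maxOther_le_add f g _ _ γ (fun j => by
            have := abs_le.1 (hfg (S i).1 j); linarith)
        have hf : f (S i).1 (S i).2 ≤ g (S i).1 (S i).2 + γ := by
          have := abs_le.1 (hfg (S i).1 (S i).2); linarith
        show f (S i).1 (S i).2 ≤ 2 * γ + maxOther f (S i).1 (S i).2
        linarith
      have hcard := Finset.card_le_card hsub
      have : ((Finset.univ.filter fun i : Fin m => S i ∈ A g).card : ℝ) ≤
          ((Finset.univ.filter fun i : Fin m =>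
            f (S i).1 (S i).2 ≤ 2 * γ + maxOther f (S i).1 (S i).2).card : ℝ) := by
        exact_mod_cast hcard
      exact div_le_div_of_nonneg_right this hm0.le
    linarith
  have hmeasU : MeasurableSet (⋃ g ∈ G, Bad g) :=
    MeasurableSet.biUnion G.countable_toSet (fun g hg => hBadmeas g hg)
  calc ENNReal.ofReal (1 - δ) = 1 - ENNReal.ofReal δ := by
        rw [ENNReal.ofReal_sub 1 hδ0.le, ENNReal.ofReal_one]
    _ ≤ 1 - ν (⋃ g ∈ G, Bad g) := tsub_le_tsub_left hunion 1
    _ = ν ((⋃ g ∈ G, Bad g)ᶜ) := (prob_compl_eq_one_sub hmeasU).symm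
    _ ≤ _ := measure_mono hsubset
end
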